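/- Let I ⊆ R be a nonzero, proper S_n-invariant monomial ideal and let ρ ∈ Λ*_max(I) be a maximal dual generator. Then for every μ ∈ Λ*(I) with μ ≠ ρ, one has ρ^ced+ ∉ O_μ, i.e. ρ^+ ≰ μ componentwise. (Here ρ^+ ∈ P_n and the comparison with μ ∈ P_n^∞ is componentwise, with ∞ largest.) -/
import Mathlib


open scoped BigOperators

noncomputable section
open Classical

/-! ## Generic (labeled) simplicial chain complexes and reduced homology over a field -/

section Homology

variable (K : Type) [Field K] {α : Type}

/-- Index type for chains: elements of `S` whose face (second component) has `j` elements. -/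
def ChainIdx (S : Set (α × Finset ℕ)) (j : ℕ) : Type :=
  {q : α × Finset ℕ // q ∈ S ∧ q.2.card = j}

/-- The boundary of a basis element, with the usual simplicial signs. -/
noncomputable def bdElt (S : Set (α × Finset ℕ)) (j : ℕ) (q : ChainIdx S (j + 1)) :
    ChainIdx S j →₀ K :=
  ∑ v ∈ q.1.2,
    if h : (q.1.1, q.1.2.erase v) ∈ S ∧ (q.1.2.erase v).card = j then
      ((-1 : K) ^ (q.1.2.filter (fun u => u ≤ v)).card) •
        Finsupp.single (⟨(q.1.1, q.1.2.erase v), h⟩ : ChainIdx S j) (1 : K)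
    else 0

/-- The simplicial boundary map. -/
noncomputable def bd (S : Set (α × Finset ℕ)) (j : ℕ) :
    (ChainIdx S (j + 1) →₀ K) →ₗ[K] (ChainIdx S j →₀ K) :=
  Finsupp.linearCombination K (bdElt K S j)

/-- Cycles in homological degree `j` (chains are indexed by the cardinality of faces;
degree `j` corresponds to reduced topological degree `j - 1`). -/
noncomputable def cycles (S : Set (α × Finset ℕ)) : (j : ℕ) → Submodule K (ChainIdx S j →₀ K)
  | 0 => ⊤
  | (i + 1) => LinearMap.ker (bd K S i)

/-- `rhd K S j` is the dimension of the reduced homology group `H̃_{j-1}` of the complex `S`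
(the chain groups being finite dimensional, this is `dim` cycles `- dim` boundaries). -/
noncomputable def rhd (S : Set (α × Finset ℕ)) (j : ℕ) : ℕ :=
  Module.finrank K (cycles K S j) -
    Module.finrank K (LinearMap.range (bd K S j) ⊓ cycles K S j : Submodule K _)

/-- `hdim K S j = dim_K H̃_j(S; K)`, for `j : ℤ` (zero for `j ≤ -2`). -/
noncomputable def hdim (S : Set (α × Finset ℕ)) (j : ℤ) : ℕ :=
  if 0 ≤ j + 1 then rhd K S (j + 1).toNat else 0

/-- View an unlabeled collection of faces as a labeled one (labels in `Unit`). -/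
def lab (Δ : Set (Finset ℕ)) : Set (Unit × Finset ℕ) := {q | q.2 ∈ Δ}

/-- Dimension of reduced homology `H̃_{j-1}(Δ; K)` of a collection `Δ` of finite sets. -/
noncomputable def rhd0 (Δ : Set (Finset ℕ)) (j : ℕ) : ℕ := rhd K (lab Δ) j

/-- Dimension of reduced homology `H̃_j(Δ; K)`, `j : ℤ`. -/
noncomputable def hdim0 (Δ : Set (Finset ℕ)) (j : ℤ) : ℕ := hdim K (lab Δ) j

end Homology

/-! ## Monomial ideals in `k[x_1, …, x_n]`, invariant under the symmetric group -/

section Poly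

variable (K : Type) [Field K] (n : ℕ)

/-- The monomial `x^a` in `k[x_1, …, x_n]`. -/
noncomputable def mon (a : Fin n → ℕ) : MvPolynomial (Fin n) K :=
  MvPolynomial.monomial (Finsupp.equivFunOnFinite.symm a) 1

/-- A monomial ideal: an ideal generated by a set of monomials. -/
def IsMonomialIdeal (I : Ideal (MvPolynomial (Fin n) K)) : Prop :=
  ∃ S : Set (Fin n → ℕ), I = Ideal.span (mon K n '' S)

/-- `I` is invariant under the action of `S_n` permuting the variables. -/
def IsSymmetricIdeal (I : Ideal (MvPolynomial (Fin n) K)) : Prop :=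
  ∀ σ : Equiv.Perm (Fin n), Ideal.map (MvPolynomial.rename σ).toRingHom I = I

end Poly

/-! ## Partitions given by blocks `(d_1^{p_1}, …, d_s^{p_s}, 0^{p_{s+1}})` -/

section Blocks

/-- `cumsum p k = p 0 + ⋯ + p (k-1)`. -/
def cumsum (p : ℕ → ℕ) (k : ℕ) : ℕ := ∑ j ∈ Finset.range k, p j

/-- The index of the block (among blocks `0, …, s`) containing position `i`,
for blocks of sizes `p 0, …, p (s-1)` followed by a final block. -/
def blkOf (p : ℕ → ℕ) (s i : ℕ) : ℕ :=
  ((Finset.range s).filter fun k => cumsum p (k + 1) ≤ i).card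

/-- The partition `μ = (d_0^{p_0}, …, d_{s-1}^{p_{s-1}}, 0^{p_s})` (0-indexed blocks),
as a function of the position `i ∈ {0, …, n-1}` where `n = cumsum p (s+1)`. -/
def muOf (s : ℕ) (d p : ℕ → ℕ) (i : ℕ) : ℕ :=
  if blkOf p s i < s then d (blkOf p s i) else 0

/-- The partition `μ ∖ c`, obtained from `μ` by replacing, for each `k`, the last `c k` of
the parts equal to `d k` by `d k - 1`. -/
def muMinus (s : ℕ) (d p c : ℕ → ℕ) (i : ℕ) : ℕ :=
  if blkOf p s i < s then
    (if p (blkOf p s i) - c (blkOf p s i) ≤ i - cumsum p (blkOf p s i) then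
      d (blkOf p s i) - 1 else d (blkOf p s i))
  else 0

/-- Indicator vector of a finite set `F`. -/
def eF (F : Finset ℕ) (j : ℕ) : ℕ := if j ∈ F then 1 else 0

end Blocks

/-! ## The simplicial complexes `Δ^{μ,c}(I)` and `Γ^{μ,c}(I)` -/

section Complexes

variable (K : Type) [Field K] (n : ℕ)

/-- The simplicial complex `Δ^{μ,c}(I) = {F ⊆ [s] : μ ∖ (c + e_F) ∈ P(I)}` (vertices are
`0, …, s-1`), for `μ = (d_0^{p_0}, …, d_{s-1}^{p_{s-1}}, 0^{p_s})` and `c ≤ p(μ)`. -/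
def DeltaCx (I : Ideal (MvPolynomial (Fin n) K)) (s : ℕ) (d p c : ℕ → ℕ) :
    Set (Finset ℕ) :=
  {F | F ⊆ Finset.range s ∧
    mon K n (fun i => muMinus s d p (fun j => c j + eF F j) i.val) ∈ I}

/-- The Alexander dual complex `Γ^{μ,c}(I) = {F ⊆ [s] : μ ∖ (c + e_{[s]∖F}) ∈ O(I)}`. -/
def GammaCx (I : Ideal (MvPolynomial (Fin n) K)) (s : ℕ) (d p c : ℕ → ℕ) :
    Set (Finset ℕ) :=
  {F | F ⊆ Finset.range s ∧
    mon K n (fun i => muMinus s d p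
      (fun j => c j + (if j < s ∧ j ∉ F then 1 else 0)) i.val) ∉ I}

/-- `γ_i^{μ,c}(I) = dim_K H̃_{i-1}(Δ^{μ,c}(I); K)`. -/
noncomputable def gammaDim (I : Ideal (MvPolynomial (Fin n) K)) (s : ℕ) (d p c : ℕ → ℕ)
    (i : ℕ) : ℕ :=
  rhd0 K (DeltaCx K n I s d p c) i

end Complexes

/-! ## Multigraded Tor via the Koszul complex

For a monomial ideal `I`, the multidegree-`a` strand of the Koszul complex `K_•(I)` is the
(shifted) reduced chain complex of the simplicial complex
`Δ_a^I = {F ⊆ [n] : a - e_F ≥ 0, x^{a - e_F} ∈ I}`, so that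
`dim_K Tor_i(I, K)_a = dim_K H̃_{i-1}(Δ_a^I; K)`, and similarly for `R/I` with the
condition `x^{a-e_F} ∉ I`. -/

section Tor

variable (K : Type) [Field K] (n : ℕ)

/-- The Koszul simplicial complex of the ideal `I` in multidegree `a`. -/
def KosI (I : Ideal (MvPolynomial (Fin n) K)) (a : Fin n → ℕ) : Set (Finset ℕ) :=
  {F | F ⊆ Finset.range n ∧ (∀ i : Fin n, (i : ℕ) ∈ F → 1 ≤ a i) ∧
    mon K n (fun i => a i - eF F i.val) ∈ I}

/-- The Koszul complex of `R/I` in multidegree `a`. -/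
def KosQ (I : Ideal (MvPolynomial (Fin n) K)) (a : Fin n → ℕ) : Set (Finset ℕ) :=
  {F | F ⊆ Finset.range n ∧ (∀ i : Fin n, (i : ℕ) ∈ F → 1 ≤ a i) ∧
    mon K n (fun i => a i - eF F i.val) ∉ I}

/-- `dim_K Tor_i(I, K)_a`, for a monomial ideal `I` and a multidegree `a ∈ ℤ^n`
(components with a negative coordinate vanish, so only `a ∈ ℕ^n` is needed). -/
noncomputable def torDim (I : Ideal (MvPolynomial (Fin n) K)) (i : ℕ) (a : Fin n → ℕ) : ℕ :=
  rhd0 K (KosI K n I a) i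

/-- `dim_K Tor_i(R/I, K)_a` for a monomial ideal `I`. -/
noncomputable def torQDim (I : Ideal (MvPolynomial (Fin n) K)) (i : ℕ) (a : Fin n → ℕ) : ℕ :=
  rhd0 K (KosQ K n I a) i

/-- `dim_K Tor_i(I, K)_{⟨μ⟩}`: the sum of `dim_K Tor_i(I, K)_a` over all rearrangements `a`
of the partition `μ`. -/
noncomputable def torDimSym (I : Ideal (MvPolynomial (Fin n) K)) (i : ℕ) (μ : Fin n → ℕ) : ℕ :=
  ∑ a ∈ Finset.image (fun σ : Equiv.Perm (Fin n) => μ ∘ σ) Finset.univ, torDim K n I i a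

/-- `dim_K Tor_i(R/I, K)_{⟨μ⟩}`. -/
noncomputable def torQDimSym (I : Ideal (MvPolynomial (Fin n) K)) (i : ℕ) (μ : Fin n → ℕ) : ℕ :=
  ∑ a ∈ Finset.image (fun σ : Equiv.Perm (Fin n) => μ ∘ σ) Finset.univ, torQDim K n I i a

end Tor

/-! ## Extended partitions in `P_n^∞` and the dual generators of an `S_n`-invariant
monomial ideal -/

section ExtendedPartitions

variable (K : Type) [Field K] (n : ℕ)

/-- `ℓ(μ)`: the number of entries of `μ ∈ P_n^∞` equal to `∞`. -/
def ellInf (μ : Fin n → ℕ∞) : ℕ := (Finset.univ.filter fun i => μ i = ⊤).card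

/-- The largest finite entry of `μ ∈ P_n^∞` (i.e. the first finite entry, `μ` being
weakly decreasing). -/
def topVal (μ : Fin n → ℕ∞) : ℕ := Finset.univ.sup fun i => (μ i).toNat

/-- `μ^+ ∈ P_n`: each `∞` entry of `μ` is replaced by (largest finite entry)` + 1`. -/
def plusOf (μ : Fin n → ℕ∞) (i : Fin n) : ℕ :=
  if μ i = ⊤ then topVal n μ + 1 else (μ i).toNat

/-- `μ̃ = μ^+ + (0^{ℓ(μ)}, 1^{n - ℓ(μ)}) ∈ P_n`. -/
def tildeOf (μ : Fin n → ℕ∞) (i : Fin n) : ℕ :=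
  if μ i = ⊤ then topVal n μ + 1 else (μ i).toNat + 1

/-- The ideal `Q_μ = ∩_{σ ∈ S_n} σ((x_k^{μ_k + 1}, …, x_n^{μ_n + 1}))`, where
`μ_k, …, μ_n` are the finite entries of `μ ∈ P_n^∞`. -/
noncomputable def Qgen (μ : Fin n → ℕ∞) : Ideal (MvPolynomial (Fin n) K) :=
  ⨅ σ : Equiv.Perm (Fin n),
    Ideal.map (MvPolynomial.rename σ).toRingHom
      (Ideal.span {g | ∃ i : Fin n, μ i ≠ ⊤ ∧ g = MvPolynomial.X i ^ ((μ i).toNat + 1)})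

/-- `Λ` is the (finite) set of dual generators of `I`, i.e. `I = ∩_{μ ∈ Λ} Q_μ` is the
irredundant presentation of `I` by ideals `Q_μ`. -/
def IsDualPresentation (I : Ideal (MvPolynomial (Fin n) K))
    (Λ : Finset (Fin n → ℕ∞)) : Prop :=
  (∀ μ ∈ Λ, Antitone μ) ∧ (I = ⨅ μ ∈ Λ, Qgen K n μ) ∧
    ∀ μ ∈ Λ, I ≠ ⨅ ρ ∈ Λ, ⨅ _ : ρ ≠ μ, Qgen K n ρ

/-- The partial order `≼` on dual generators: `μ ≼ ρ` iff `μ̃ ≤ ρ̃` (componentwise) and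
`ℓ(μ) - ℓ(ρ) ≤ |ρ̃| - |μ̃|`. -/
def preceq (μ ρ : Fin n → ℕ∞) : Prop :=
  (∀ i, tildeOf n μ i ≤ tildeOf n ρ i) ∧
    (∑ i, tildeOf n μ i) + ellInf n μ ≤ (∑ i, tildeOf n ρ i) + ellInf n ρ

/-- The extended partition `ρ = (∞^{p_0}, d_1^{p_1}, …, d_s^{p_s}) ∈ P_n^∞`
(so `n = p 0 + p 1 + ⋯ + p s`), as a function of the position `i ∈ {0, …, n-1}`. -/
def rhoOf (s : ℕ) (d p : ℕ → ℕ) (i : ℕ) : ℕ∞ :=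
  if blkOf p (s + 1) i = 0 then ⊤ else ((d (blkOf p (s + 1) i) : ℕ) : ℕ∞)

end ExtendedPartitions

/-- If `ρ ≤ μ` pointwise in `ℕ∞`, then `Q_μ ⊆ Q_ρ`. -/
lemma Qgen_le_of_le (K : Type) [Field K] (n : ℕ) {ρ μ : Fin n → ℕ∞}
    (h : ∀ i, ρ i ≤ μ i) : Qgen K n μ ≤ Qgen K n ρ := by
  refine iInf_mono fun σ => Ideal.map_mono ?_
  rw [Ideal.span_le]
  rintro g ⟨i, hi, rfl⟩
  have hρi : ρ i ≠ ⊤ := fun ht => hi (top_le_iff.mp (ht ▸ h i))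
  have hle : (ρ i).toNat ≤ (μ i).toNat := ENat.toNat_le_toNat (h i) hi
  have hpow : MvPolynomial.X (R := K) i ^ ((μ i).toNat + 1) =
      MvPolynomial.X i ^ ((μ i).toNat - (ρ i).toNat) * MvPolynomial.X i ^ ((ρ i).toNat + 1) := by
    rw [← pow_add]; congr 1; omega
  rw [hpow]
  exact Ideal.mul_mem_left _ _ (Ideal.subset_span ⟨i, hρi, rfl⟩)

lemma sum_tilde_add_ellInf (n : ℕ) (ν : Fin n → ℕ∞) :
    (∑ i, tildeOf n ν i) + ellInf n ν = ∑ i : Fin n, (plusOf n ν i + 1) := by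
  have hcard : ellInf n ν = ∑ i : Fin n, (if ν i = ⊤ then 1 else 0) := by
    rw [ellInf, Finset.card_filter]
  rw [hcard, ← Finset.sum_add_distrib]
  refine Finset.sum_congr rfl fun i _ => ?_
  unfold tildeOf plusOf
  by_cases hi : ν i = ⊤ <;> simp [hi]

/-- If `ρ ∈ Λ*_max(I)` is a maximal dual generator of a nonzero, proper
`S_n`-invariant monomial ideal `I`, then for every dual generator `μ ∈ Λ*(I)` with `μ ≠ ρ`
one has `ρ^+ ∉ O_μ`, i.e. `ρ^+ ≰ μ` componentwise (with `∞` largest). -/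
theorem statement_7 (K : Type) [Field K] (n : ℕ) (I : Ideal (MvPolynomial (Fin n) K))
    (hmon : IsMonomialIdeal K n I) (hsym : IsSymmetricIdeal K n I)
    (hne : I ≠ ⊥) (hproper : I ≠ ⊤)
    (Λ : Finset (Fin n → ℕ∞)) (hpres : IsDualPresentation K n I Λ)
    (ρ : Fin n → ℕ∞) (hρ : ρ ∈ Λ) (hmax : ∀ μ ∈ Λ, preceq n ρ μ → μ = ρ)
    (μ : Fin n → ℕ∞) (hμ : μ ∈ Λ) (hne2 : μ ≠ ρ) :
    ¬ ∀ i : Fin n, ((plusOf n ρ i : ℕ) : ℕ∞) ≤ μ i := by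
  intro h
  by_cases hD : ∀ i, μ i = ⊤ → ρ i = ⊤
  · -- Case D: the ∞-entries of μ are among those of ρ; show ρ ≼ μ and use maximality.
    -- basic pointwise facts
    have f1 : ∀ i, ρ i ≠ ⊤ → μ i ≠ ⊤ ∧ (ρ i).toNat ≤ (μ i).toNat := by
      intro i hρi
      have hμi : μ i ≠ ⊤ := fun hm => hρi (hD i hm)
      have h1 : (((ρ i).toNat : ℕ) : ℕ∞) ≤ μ i := by
        have := h i
        rwa [plusOf, if_neg hρi] at this
      rw [← ENat.coe_toNat hμi] at h1
      exact ⟨hμi, Nat.cast_le.mp h1⟩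
    have f2 : topVal n ρ ≤ topVal n μ := by
      refine Finset.sup_le fun i _ => ?_
      by_cases hρi : ρ i = ⊤
      · simp [hρi]
      · exact le_trans (f1 i hρi).2 (Finset.le_sup (f := fun i => (μ i).toNat) (Finset.mem_univ i))
    have f3 : ∀ i, ρ i = ⊤ → μ i ≠ ⊤ → topVal n ρ + 1 ≤ (μ i).toNat := by
      intro i hρi hμi
      have h1 := h i
      rw [plusOf, if_pos hρi, ← ENat.coe_toNat hμi] at h1
      exact_mod_cast h1
    have htilde : ∀ i, tildeOf n ρ i ≤ tildeOf n μ i := by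
      intro i
      unfold tildeOf
      by_cases hρi : ρ i = ⊤ <;> by_cases hμi : μ i = ⊤
      · simp [hρi, hμi]; omega
      · have := f3 i hρi hμi; simp [hρi, hμi]; omega
      · exact absurd (hD i hμi) hρi
      · have := (f1 i hρi).2; simp [hρi, hμi]; omega
    have hplus : ∀ i, plusOf n ρ i ≤ plusOf n μ i := by
      intro i
      unfold plusOf
      by_cases hρi : ρ i = ⊤ <;> by_cases hμi : μ i = ⊤
      · simp [hρi, hμi]; omega
      · have := f3 i hρi hμi; simp [hρi, hμi]; omega
      · exact absurd (hD i hμi) hρi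
      · have := (f1 i hρi).2; simp [hρi, hμi]; omega
    have hsum : (∑ i, tildeOf n ρ i) + ellInf n ρ ≤ (∑ i, tildeOf n μ i) + ellInf n μ := by
      rw [sum_tilde_add_ellInf, sum_tilde_add_ellInf]
      exact Finset.sum_le_sum fun i _ => by have := hplus i; omega
    exact hne2 (hmax μ hμ ⟨htilde, hsum⟩)
  · -- Case ¬D: some μ i = ⊤ with ρ i ≠ ⊤; then ρ ≤ μ pointwise and ρ is redundant.
    push_neg at hD
    obtain ⟨j, hjμ, hjρ⟩ := hD
    have hAρ : Antitone ρ := hpres.1 ρ hρ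
    have hAμ : Antitone μ := hpres.1 μ hμ
    have hle : ∀ i, ρ i ≤ μ i := by
      intro i
      by_cases hμi : μ i = ⊤
      · simp [hμi]
      · have hρi : ρ i ≠ ⊤ := by
          intro hρi
          rcases le_total i j with hij | hij
          · exact hμi (top_le_iff.mp (hjμ ▸ hAμ hij))
          · exact hjρ (top_le_iff.mp (hρi ▸ hAρ hij))
        have h1 := h i
        rwa [plusOf, if_neg hρi, ENat.coe_toNat hρi] at h1
    have hQ : Qgen K n μ ≤ Qgen K n ρ := Qgen_le_of_le K n hle
    have hIeq : I = ⨅ ν' ∈ Λ, ⨅ _ : ν' ≠ ρ, Qgen K n ν' := by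
      rw [hpres.2.1]
      refine le_antisymm (le_iInf₂ fun ν' hν' => le_iInf fun _ => iInf₂_le ν' hν') ?_
      refine le_iInf₂ fun ν' hν' => ?_
      by_cases hx : ν' = ρ
      · subst hx
        exact le_trans (le_trans (iInf₂_le μ hμ) (iInf_le _ hne2)) hQ
      · exact le_trans (iInf₂_le ν' hν') (iInf_le _ hx)
    exact hpres.2.2 ρ hρ hIeq
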